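/- Under the stated assumptions, the energy functional I is coercive on S: for every R ∈ ℝ there exists ρ > 0 such that I(u,v) ≥ R for all (u,v) ∈ S with ‖u‖_{X₀} + ‖v‖_{X₀} ≥ ρ. -/

import Mathlib

open MeasureTheory ENNReal Filter

/-- The modular `ρ_λ(u) = ∬_{ℝ^{2N}} |u(x) − u(y)|^{p(x,y)} /
(λ^{p(x,y)} |x − y|^{N + p(x,y)s(x,y)}) dx dy`, as a value in `[0,∞]`. -/
noncomputable def fracModular (N : ℕ)
    (p s : EuclideanSpace ℝ (Fin N) × EuclideanSpace ℝ (Fin N) → ℝ)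
    (lam : ℝ) (u : EuclideanSpace ℝ (Fin N) → ℝ) : ℝ≥0∞ :=
  ∫⁻ z : EuclideanSpace ℝ (Fin N) × EuclideanSpace ℝ (Fin N),
    ENNReal.ofReal
      (|u z.1 - u z.2| ^ p z / (lam ^ p z * ‖z.1 - z.2‖ ^ ((N : ℝ) + p z * s z)))

/-- The Gagliardo–Luxemburg norm `‖u‖_{X₀} = inf { λ > 0 : ρ_λ(u) ≤ 1 }`. -/
noncomputable def fracNorm (N : ℕ)
    (p s : EuclideanSpace ℝ (Fin N) × EuclideanSpace ℝ (Fin N) → ℝ)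
    (u : EuclideanSpace ℝ (Fin N) → ℝ) : ℝ :=
  sInf {lam : ℝ | 0 < lam ∧ fracModular N p s lam u ≤ 1}

/-- `δ(u) = ∬_{ℝ^{2N}} (1/p(x,y)) |u(x) − u(y)|^{p(x,y)} / |x − y|^{N + p(x,y)s(x,y)} dx dy`. -/
noncomputable def deltaModular (N : ℕ)
    (p s : EuclideanSpace ℝ (Fin N) × EuclideanSpace ℝ (Fin N) → ℝ)
    (u : EuclideanSpace ℝ (Fin N) → ℝ) : ℝ≥0∞ :=
  ∫⁻ z : EuclideanSpace ℝ (Fin N) × EuclideanSpace ℝ (Fin N),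
    ENNReal.ofReal
      (1 / p z * (|u z.1 - u z.2| ^ p z / ‖z.1 - z.2‖ ^ ((N : ℝ) + p z * s z)))

/-- The Luxemburg norm `‖w‖_{r(·)} = inf { λ > 0 : ∫_Ω |w(x)/λ|^{r(x)} dx ≤ 1 }` on `Ω`. -/
noncomputable def luxNorm {N : ℕ} (Ω : Set (EuclideanSpace ℝ (Fin N)))
    (r : EuclideanSpace ℝ (Fin N) → ℝ) (w : EuclideanSpace ℝ (Fin N) → ℝ) : ℝ :=
  sInf {lam : ℝ | 0 < lam ∧ ∫⁻ x in Ω, ENNReal.ofReal (|w x / lam| ^ r x) ≤ 1}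

/-- Membership in `X₀`: measurable, vanishing a.e. outside `Ω`, with finite norm
(i.e. some `λ > 0` is admissible in the Luxemburg infimum). -/
def memX0 (N : ℕ)
    (p s : EuclideanSpace ℝ (Fin N) × EuclideanSpace ℝ (Fin N) → ℝ)
    (Ω : Set (EuclideanSpace ℝ (Fin N))) (u : EuclideanSpace ℝ (Fin N) → ℝ) : Prop :=
  Measurable u ∧ (∀ᵐ x : EuclideanSpace ℝ (Fin N), x ∉ Ω → u x = 0) ∧
    ∃ lam > (0 : ℝ), fracModular N p s lam u ≤ 1

/-- The energy functional
`I(u,v) = M̃₁(δ(u)) + M̃₂(δ(v)) − ∫_Ω H(u,v) − ∫_Ω a u − ∫_Ω b v`,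
where `M̃ᵢ(t) = ∫_0^t Mᵢ(τ) dτ`. -/
noncomputable def energy (N : ℕ)
    (p s : EuclideanSpace ℝ (Fin N) × EuclideanSpace ℝ (Fin N) → ℝ)
    (Ω : Set (EuclideanSpace ℝ (Fin N))) (M₁ M₂ : ℝ → ℝ) (H : ℝ → ℝ → ℝ)
    (a b : EuclideanSpace ℝ (Fin N) → ℝ) (u v : EuclideanSpace ℝ (Fin N) → ℝ) : ℝ :=
  (∫ τ in Set.Ioo (0 : ℝ) ((deltaModular N p s u).toReal), M₁ τ) +
    (∫ τ in Set.Ioo (0 : ℝ) ((deltaModular N p s v).toReal), M₂ τ) -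
    (∫ x in Ω, H (u x) (v x)) - (∫ x in Ω, a x * u x) - ∫ x in Ω, b x * v x


-- generic arithmetic choice lemma
lemma arith_choice (c₁ K K₀ R α : ℝ) (hc : 0 < c₁) (hα : 1 < α) (hK : 0 ≤ K) (hK₀ : 0 ≤ K₀) :
    ∃ ρ : ℝ, 4 ≤ ρ ∧ ∀ T, ρ ≤ T → K * T + K₀ + R ≤ c₁ * (T / 4) ^ α := by
  set D : ℝ := (4 * (K + K₀ + |R| + 1)) / c₁ with hD
  have hD0 : 0 ≤ D := by positivity
  refine ⟨max 4 (4 * (D + 1) ^ (α - 1)⁻¹), le_max_left _ _, ?_⟩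
  intro T hT
  have hT4 : (4 : ℝ) ≤ T := le_trans (le_max_left _ _) hT
  have h2 : (D + 1) ^ (α - 1)⁻¹ ≤ T / 4 := by
    have := le_trans (le_max_right (4:ℝ) _) hT; linarith
  have h3 : D + 1 ≤ (T / 4) ^ (α - 1) := by
    calc D + 1 = ((D + 1) ^ (α - 1)⁻¹) ^ (α - 1) :=
          (Real.rpow_inv_rpow (by positivity) (by linarith)).symm
      _ ≤ (T / 4) ^ (α - 1) := Real.rpow_le_rpow (by positivity) h2 (by linarith)
  have h4 : (T / 4) ^ α = (T / 4) * (T / 4) ^ (α - 1) := by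
    have h := Real.rpow_add (show (0:ℝ) < T / 4 by linarith) 1 (α - 1)
    rw [show (1:ℝ) + (α - 1) = α by ring, Real.rpow_one] at h
    exact h
  have h5 : c₁ * (D + 1) = 4 * (K + K₀ + |R| + 1) + c₁ := by
    rw [hD, mul_add, mul_div_assoc', mul_div_cancel_left₀ _ hc.ne', mul_one]
  have h6 : (T / 4) * (4 * (K + K₀ + |R| + 1)) ≤ c₁ * (T / 4) ^ α := by
    rw [h4]
    have : (T / 4) * (4 * (K + K₀ + |R| + 1)) ≤ (T / 4) * (c₁ * (D + 1)) := by
      apply mul_le_mul_of_nonneg_left _ (by linarith); linarith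
    refine this.trans ?_
    have := mul_le_mul_of_nonneg_left h3 (mul_nonneg hc.le (by linarith : (0:ℝ) ≤ T/4))
    nlinarith [Real.rpow_nonneg (by linarith : (0:ℝ) ≤ T/4) (α-1)]
  nlinarith [le_abs_self R, abs_nonneg R]


-- ∫_{Ioo 0 t} M ≥ (m/γ) t^γ
lemma mtilde_lb {M : ℝ → ℝ} {m γ : ℝ} (hm : 0 < m) (hγ : 0 < γ)
    (hlow : ∀ t : ℝ, 0 < t → m * t ^ (γ - 1) ≤ M t)
    (hint : ∀ t : ℝ, 0 < t → IntegrableOn M (Set.Ioo 0 t) volume)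
    {t : ℝ} (ht : 0 < t) :
    m / γ * t ^ γ ≤ ∫ τ in Set.Ioo (0 : ℝ) t, M τ := by
  have h1 : -1 < γ - 1 := by linarith
  have hint2 : IntegrableOn (fun τ : ℝ => m * τ ^ (γ - 1)) (Set.Ioo 0 t) volume := by
    have := (intervalIntegral.intervalIntegrable_rpow' (a := 0) (b := t) h1)
    have h2 : IntegrableOn (fun τ : ℝ => τ ^ (γ - 1)) (Set.Ioc 0 t) volume :=
      (intervalIntegrable_iff_integrableOn_Ioc_of_le ht.le).mp this
    exact (h2.mono_set Set.Ioo_subset_Ioc_self).const_mul m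
  have hval : ∫ τ in Set.Ioo (0 : ℝ) t, m * τ ^ (γ - 1) = m / γ * t ^ γ := by
    rw [← MeasureTheory.integral_Ioc_eq_integral_Ioo,
      ← intervalIntegral.integral_of_le ht.le, intervalIntegral.integral_const_mul,
      integral_rpow (Or.inl h1)]
    rw [show γ - 1 + 1 = γ by ring, Real.zero_rpow (by linarith : γ ≠ 0)]
    field_simp
    ring
  calc m / γ * t ^ γ = ∫ τ in Set.Ioo (0 : ℝ) t, m * τ ^ (γ - 1) := hval.symm
    _ ≤ ∫ τ in Set.Ioo (0 : ℝ) t, M τ :=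
      setIntegral_mono_on hint2 (hint t ht) measurableSet_Ioo (fun τ hτ => hlow τ hτ.1)


/-- Hölder-type pairing bound from unit modulars. -/
lemma pairing_bound {X : Type*} [MeasurableSpace X] (μ : Measure X)
    (S : Set X) (hS : MeasurableSet S)
    (pbar q : X → ℝ) (hpbarm : Measurable pbar)
    (hconj : ∀ x ∈ S, 1 < pbar x ∧ 1 / pbar x + 1 / q x = 1)
    (f g : X → ℝ) (hg : Measurable g) {la lu : ℝ} (hla : 0 < la) (hlu : 0 < lu)
    (hF : ∫⁻ x in S, ENNReal.ofReal (|f x / la| ^ q x) ∂μ ≤ 1)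
    (hG : ∫⁻ x in S, ENNReal.ofReal (|g x / lu| ^ pbar x) ∂μ ≤ 1) :
    |∫ x in S, f x * g x ∂μ| ≤ 2 * (la * lu) := by
  by_cases hint : Integrable (fun x => f x * g x) (μ.restrict S)
  · have key : ∫⁻ x in S, ENNReal.ofReal |f x * g x| ∂μ ≤ ENNReal.ofReal (2 * (la * lu)) := by
      have hpt : ∀ x ∈ S, ENNReal.ofReal |f x * g x| ≤
          ENNReal.ofReal (la * lu) * ENNReal.ofReal (|f x / la| ^ q x) +
          ENNReal.ofReal (la * lu) * ENNReal.ofReal (|g x / lu| ^ pbar x) := by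
        intro x hx
        obtain ⟨hp1, hpq⟩ := hconj x hx
        have hq1 : 1 < q x := by
          have hp0 : 0 < pbar x := by linarith
          have h1 : 1 / pbar x < 1 := by rw [div_lt_one hp0]; exact hp1
          have h2 : 0 < 1 / q x := by linarith
          have hq0 : 0 < q x := by
            rcases lt_trichotomy (q x) 0 with h | h | h
            · exfalso; have : 1 / q x < 0 := by exact div_neg_of_pos_of_neg one_pos h
              linarith
            · exfalso; rw [h] at h2; simp at h2
            · exact h
          have h3 : 1 / q x < 1 := by
            have : 0 < 1 / pbar x := by positivity
            linarith
          rwa [div_lt_one hq0] at h3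
        have hconj' : Real.HolderConjugate (pbar x) (q x) := by
          rw [Real.holderConjugate_iff]
          constructor
          · exact hp1
          · rw [← one_div, ← one_div]; exact hpq
        have hA : (0:ℝ) ≤ |f x / la| := abs_nonneg _
        have hB : (0:ℝ) ≤ |g x / lu| := abs_nonneg _
        have hy : |g x / lu| * |f x / la| ≤
            |g x / lu| ^ pbar x / pbar x + |f x / la| ^ q x / q x :=
          Real.young_inequality_of_nonneg hB hA hconj'
        have hy2 : |g x / lu| * |f x / la| ≤ |g x / lu| ^ pbar x + |f x / la| ^ q x := by
          refine hy.trans (add_le_add ?_ ?_)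
          · exact div_le_self (Real.rpow_nonneg hB _) (by linarith)
          · exact div_le_self (Real.rpow_nonneg hA _) (by linarith)
        have heq : |f x * g x| = (la * lu) * (|g x / lu| * |f x / la|) := by
          rw [abs_mul, abs_div, abs_div, abs_of_pos hla, abs_of_pos hlu]
          field_simp
        have hreal : |f x * g x| ≤ la * lu * (|f x / la| ^ q x) +
            la * lu * (|g x / lu| ^ pbar x) := by
          rw [heq]
          nlinarith [mul_le_mul_of_nonneg_left hy2 (by positivity : (0:ℝ) ≤ la * lu)]
        calc ENNReal.ofReal |f x * g x|
            ≤ ENNReal.ofReal (la * lu * (|f x / la| ^ q x) +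
              la * lu * (|g x / lu| ^ pbar x)) := ENNReal.ofReal_le_ofReal hreal
          _ ≤ ENNReal.ofReal (la * lu * (|f x / la| ^ q x)) +
              ENNReal.ofReal (la * lu * (|g x / lu| ^ pbar x)) := ENNReal.ofReal_add_le
          _ = ENNReal.ofReal (la * lu) * ENNReal.ofReal (|f x / la| ^ q x) +
              ENNReal.ofReal (la * lu) * ENNReal.ofReal (|g x / lu| ^ pbar x) := by
              congr 1 <;> rw [ENNReal.ofReal_mul (by positivity : (0:ℝ) ≤ la * lu)]
      calc ∫⁻ x in S, ENNReal.ofReal |f x * g x| ∂μ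
          ≤ ∫⁻ x in S, (ENNReal.ofReal (la * lu) * ENNReal.ofReal (|f x / la| ^ q x) +
              ENNReal.ofReal (la * lu) * ENNReal.ofReal (|g x / lu| ^ pbar x)) ∂μ := by
            refine lintegral_mono_ae ((ae_restrict_iff' hS).2 (ae_of_all _ hpt))
        _ = (∫⁻ x in S, ENNReal.ofReal (la * lu) * ENNReal.ofReal (|f x / la| ^ q x) ∂μ) +
            ∫⁻ x in S, ENNReal.ofReal (la * lu) * ENNReal.ofReal (|g x / lu| ^ pbar x) ∂μ := by
            refine lintegral_add_right _ ?_
            exact (measurable_const.mul ((hg.div measurable_const).abs.pow hpbarm).ennreal_ofReal)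
        _ = ENNReal.ofReal (la * lu) * (∫⁻ x in S, ENNReal.ofReal (|f x / la| ^ q x) ∂μ) +
            ENNReal.ofReal (la * lu) * ∫⁻ x in S, ENNReal.ofReal (|g x / lu| ^ pbar x) ∂μ := by
            rw [lintegral_const_mul' _ _ ENNReal.ofReal_ne_top,
              lintegral_const_mul' _ _ ENNReal.ofReal_ne_top]
        _ ≤ ENNReal.ofReal (la * lu) * 1 + ENNReal.ofReal (la * lu) * 1 := by
            gcongr
        _ = ENNReal.ofReal (2 * (la * lu)) := by
            rw [mul_one, ← two_mul, ← ENNReal.ofReal_ofNat, ← ENNReal.ofReal_mul (by norm_num)]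
    have h1 : |∫ x in S, f x * g x ∂μ| ≤ ∫ x in S, |f x * g x| ∂μ := by
      have := norm_integral_le_integral_norm (μ := μ.restrict S) (f := fun x => f x * g x)
      simp only [Real.norm_eq_abs] at this
      exact this
    have h2 : ∫ x in S, |f x * g x| ∂μ =
        (∫⁻ x in S, ENNReal.ofReal |f x * g x| ∂μ).toReal := by
      rw [integral_eq_lintegral_of_nonneg_ae (ae_of_all _ fun x => abs_nonneg _)
        hint.abs.aestronglyMeasurable]
    have h3 : (∫⁻ x in S, ENNReal.ofReal |f x * g x| ∂μ).toReal ≤ 2 * (la * lu) := by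
      have := ENNReal.toReal_mono ENNReal.ofReal_ne_top key
      rwa [ENNReal.toReal_ofReal (by positivity)] at this
    linarith [h1.trans (h2.le.trans h3)]
  · rw [integral_undef hint]
    simp only [abs_zero]
    positivity


lemma trunc_abs (a c : ℝ) (hc : 0 ≤ c) : |max (min a c) (-c)| = min |a| c := by
  rcases le_total 0 a with h | h
  · rw [abs_of_nonneg h]
    rcases le_total a c with h2 | h2
    · rw [min_eq_left h2, max_eq_left (by linarith), abs_of_nonneg h]
    · rw [min_eq_right h2, max_eq_left (by linarith), abs_of_nonneg hc]
  · rw [abs_of_nonpos h]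
    rcases le_total a (-c) with h2 | h2
    · rw [min_eq_left (by linarith), max_eq_right h2, abs_of_nonpos (by linarith),
        min_eq_right (by linarith)]
      ring
    · rw [min_eq_left (by linarith), max_eq_left h2, abs_of_nonpos h,
        min_eq_left (by linarith)]

lemma trunc_lipschitz (a b c : ℝ) :
    |max (min a c) (-c) - max (min b c) (-c)| ≤ |a - b| := by
  refine (abs_max_sub_max_le_abs _ _ _).trans ?_
  have := abs_min_sub_min_le_max a c b c
  simpa using this

lemma luxModular_anti {X : Type*} [MeasurableSpace X] (μ : Measure X) (S : Set X)
    (r w : X → ℝ) (hr : ∀ x, 0 ≤ r x) {l l' : ℝ} (hl : 0 < l) (hll' : l ≤ l') :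
    ∫⁻ x in S, ENNReal.ofReal (|w x / l'| ^ r x) ∂μ ≤
      ∫⁻ x in S, ENNReal.ofReal (|w x / l| ^ r x) ∂μ := by
  refine lintegral_mono fun x => ENNReal.ofReal_le_ofReal ?_
  have hl' : 0 < l' := lt_of_lt_of_le hl hll'
  refine Real.rpow_le_rpow (abs_nonneg _) ?_ (hr x)
  rw [abs_div, abs_div, abs_of_pos hl, abs_of_pos hl']
  exact div_le_div_of_nonneg_left (abs_nonneg _) hl hll' |>.trans_eq rfl


lemma div_le_div_nonneg_denom {a b c : ℝ} (hab : a ≤ b) (hc : 0 ≤ c) : a / c ≤ b / c := by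
  rcases eq_or_lt_of_le hc with h | h
  · simp [← h]
  · exact (div_le_div_iff_of_pos_right h).mpr hab

lemma rpow_le_self {w e : ℝ} (h0 : 0 ≤ w) (h1 : w ≤ 1) (he : 1 ≤ e) : w ^ e ≤ w := by
  rcases eq_or_lt_of_le h0 with h | h
  · rw [← h, Real.zero_rpow (by linarith : e ≠ 0)]
  · calc w ^ e ≤ w ^ (1:ℝ) := Real.rpow_le_rpow_of_exponent_ge h h1 he
      _ = w := Real.rpow_one w

lemma rhoInt_measurable {N : ℕ}
    {p s : EuclideanSpace ℝ (Fin N) × EuclideanSpace ℝ (Fin N) → ℝ}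
    (hpc : Continuous p) (hsc : Continuous s) (lam : ℝ)
    {u : EuclideanSpace ℝ (Fin N) → ℝ} (hu : Measurable u) :
    Measurable (fun z : EuclideanSpace ℝ (Fin N) × EuclideanSpace ℝ (Fin N) =>
      ENNReal.ofReal
        (|u z.1 - u z.2| ^ p z / (lam ^ p z * ‖z.1 - z.2‖ ^ ((N : ℝ) + p z * s z)))) := by
  have h1 : Measurable fun z : EuclideanSpace ℝ (Fin N) × EuclideanSpace ℝ (Fin N) =>
      |u z.1 - u z.2| := ((hu.comp measurable_fst).sub (hu.comp measurable_snd)).abs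
  have hA := h1.pow hpc.measurable
  have hB : Measurable fun z : EuclideanSpace ℝ (Fin N) × EuclideanSpace ℝ (Fin N) =>
      lam ^ p z * ‖z.1 - z.2‖ ^ ((N : ℝ) + p z * s z) :=
    (measurable_const.pow hpc.measurable).mul
      ((measurable_fst.sub measurable_snd).norm.pow
        (measurable_const.add (hpc.measurable.mul hsc.measurable)))
  exact (hA.div hB).ennreal_ofReal

lemma deltaInt_measurable {N : ℕ}
    {p s : EuclideanSpace ℝ (Fin N) × EuclideanSpace ℝ (Fin N) → ℝ}
    (hpc : Continuous p) (hsc : Continuous s)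
    {u : EuclideanSpace ℝ (Fin N) → ℝ} (hu : Measurable u) :
    Measurable (fun z : EuclideanSpace ℝ (Fin N) × EuclideanSpace ℝ (Fin N) =>
      ENNReal.ofReal
        (1 / p z * (|u z.1 - u z.2| ^ p z / ‖z.1 - z.2‖ ^ ((N : ℝ) + p z * s z)))) := by
  have h1 : Measurable fun z : EuclideanSpace ℝ (Fin N) × EuclideanSpace ℝ (Fin N) =>
      |u z.1 - u z.2| := ((hu.comp measurable_fst).sub (hu.comp measurable_snd)).abs
  have hA := h1.pow hpc.measurable
  have hB : Measurable fun z : EuclideanSpace ℝ (Fin N) × EuclideanSpace ℝ (Fin N) =>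
      ‖z.1 - z.2‖ ^ ((N : ℝ) + p z * s z) :=
    (measurable_fst.sub measurable_snd).norm.pow
      (measurable_const.add (hpc.measurable.mul hsc.measurable))
  exact ((measurable_const.div hpc.measurable).mul (hA.div hB)).ennreal_ofReal

lemma div_mul_denom (A B c : ℝ) : A / (c * B) = A / B / c := by
  rw [div_div, mul_comm]

/-- anti-monotonicity of the modular in `lam`. -/
lemma fracModular_anti {N : ℕ}
    {p s : EuclideanSpace ℝ (Fin N) × EuclideanSpace ℝ (Fin N) → ℝ}
    (hp0 : ∀ z, 0 ≤ p z) {u : EuclideanSpace ℝ (Fin N) → ℝ}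
    {l l' : ℝ} (hl : 0 < l) (hll' : l ≤ l') :
    fracModular N p s l' u ≤ fracModular N p s l u := by
  refine lintegral_mono fun z => ENNReal.ofReal_le_ofReal ?_
  set A := |u z.1 - u z.2| ^ p z with hA
  set B := ‖z.1 - z.2‖ ^ ((N : ℝ) + p z * s z) with hB
  have hA0 : 0 ≤ A := Real.rpow_nonneg (abs_nonneg _) _
  have hB0 : 0 ≤ B := Real.rpow_nonneg (norm_nonneg _) _
  have hle : l ^ p z ≤ l' ^ p z := Real.rpow_le_rpow hl.le hll' (hp0 z)
  have hlp : 0 < l ^ p z := Real.rpow_pos_of_pos hl _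
  rcases eq_or_lt_of_le hB0 with hB0' | hB0'
  · rw [← hB0', mul_zero, mul_zero]
  · have h1 : l ^ p z * B ≤ l' ^ p z * B := mul_le_mul_of_nonneg_right hle hB0
    exact div_le_div_of_nonneg_left hA0 (by positivity) h1


lemma fracModular_trunc_le {N : ℕ}
    {p s : EuclideanSpace ℝ (Fin N) × EuclideanSpace ℝ (Fin N) → ℝ}
    (hp0 : ∀ z, 0 ≤ p z) {l : ℝ} (hl : 0 < l) (c : ℝ)
    (u : EuclideanSpace ℝ (Fin N) → ℝ) :
    fracModular N p s l (fun x => max (min (u x) c) (-c)) ≤ fracModular N p s l u := by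
  refine lintegral_mono fun z => ENNReal.ofReal_le_ofReal ?_
  have hA : |max (min (u z.1) c) (-c) - max (min (u z.2) c) (-c)| ^ p z ≤
      |u z.1 - u z.2| ^ p z :=
    Real.rpow_le_rpow (abs_nonneg _) (trunc_lipschitz _ _ _) (hp0 z)
  exact div_le_div_nonneg_denom hA
    (mul_nonneg (Real.rpow_nonneg hl.le _) (Real.rpow_nonneg (norm_nonneg _) _))

lemma lux_admissible {N : ℕ}
    {p s : EuclideanSpace ℝ (Fin N) × EuclideanSpace ℝ (Fin N) → ℝ}
    (hpc : Continuous p) (hp1 : ∀ z, 1 ≤ p z)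
    {Ω : Set (EuclideanSpace ℝ (Fin N))}
    (hvol : volume Ω ≠ ⊤)
    {C : ℝ} (hC : 0 < C)
    (hembed : ∀ u, memX0 N p s Ω u →
      luxNorm Ω (fun x => p (x, x)) u ≤ C * fracNorm N p s u)
    (u : EuclideanSpace ℝ (Fin N) → ℝ) (hu : memX0 N p s Ω u) :
    ∫⁻ x in Ω, ENNReal.ofReal
      (|u x / (C * fracNorm N p s u + 1)| ^ p (x, x)) ≤ 1 := by
  obtain ⟨hum, hu0, l₀, hl₀, hl₀m⟩ := hu
  have hp0 : ∀ z, (0:ℝ) ≤ p z := fun z => le_trans zero_le_one (hp1 z)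
  have hpbarm : Measurable fun x : EuclideanSpace ℝ (Fin N) => p (x, x) :=
    (hpc.comp (continuous_id.prodMk continuous_id)).measurable
  set t := fracNorm N p s u with ht
  have ht0 : 0 ≤ t := Real.sInf_nonneg fun x hx => hx.1.le
  set lam := C * t + 1 with hlam
  have hlam0 : 0 < lam := by positivity
  set U : ℕ → EuclideanSpace ℝ (Fin N) → ℝ :=
    fun n x => max (min (u x) n) (-(n : ℝ)) with hUdef
  have hUmeas : ∀ n, Measurable (U n) :=
    fun n => (hum.min measurable_const).max measurable_const
  have hUabs : ∀ n x, |U n x| = min |u x| n := fun n x => trunc_abs _ _ (Nat.cast_nonneg n)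
  have hUmem : ∀ n : ℕ, memX0 N p s Ω (U n) := by
    intro n
    refine ⟨hUmeas n, ?_, l₀, hl₀, le_trans (fracModular_trunc_le hp0 hl₀ _ u) hl₀m⟩
    filter_upwards [hu0] with x hx hxΩ
    simp only [hUdef]
    rw [hx hxΩ, min_eq_left (by positivity), max_eq_left (by simp)]
  have hnormle : ∀ n, fracNorm N p s (U n) ≤ t := by
    intro n
    refine csInf_le_csInf ⟨0, fun x hx => hx.1.le⟩ ⟨l₀, hl₀, hl₀m⟩ ?_
    intro l hl
    exact ⟨hl.1, le_trans (fracModular_trunc_le hp0 hl.1 _ u) hl.2⟩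
  have hlux : ∀ n, luxNorm Ω (fun x => p (x, x)) (U n) < lam := by
    intro n
    refine lt_of_le_of_lt (hembed _ (hUmem n)) ?_
    have := mul_le_mul_of_nonneg_left (hnormle n) hC.le
    rw [hlam]; linarith
  set V := (volume Ω).toReal with hV
  have hV0 : 0 ≤ V := ENNReal.toReal_nonneg
  have hluxne : ∀ n : ℕ, ((n : ℝ) + 1) * (V + 1) ∈
      {l : ℝ | 0 < l ∧ ∫⁻ x in Ω, ENNReal.ofReal (|U n x / l| ^ p (x, x)) ≤ 1} := by
    intro n
    set ln := ((n : ℝ) + 1) * (V + 1) with hln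
    have hln0 : 0 < ln := by positivity
    refine ⟨hln0, ?_⟩
    have hpt : ∀ x : EuclideanSpace ℝ (Fin N),
        ENNReal.ofReal (|U n x / ln| ^ p (x, x)) ≤ ENNReal.ofReal (1 / (V + 1)) := by
      intro x
      refine ENNReal.ofReal_le_ofReal ?_
      have h1 : |U n x| ≤ (n : ℝ) := by rw [hUabs]; exact min_le_right _ _
      have h2 : |U n x / ln| ≤ (n : ℝ) / ln := by
        rw [abs_div, abs_of_pos hln0]
        exact div_le_div_nonneg_denom h1 hln0.le
      have h3 : ((n : ℝ)) / ln ≤ 1 := by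
        rw [div_le_one hln0, hln]; nlinarith
      refine le_trans (rpow_le_self (abs_nonneg _) (le_trans h2 h3) (hp1 _)) ?_
      refine le_trans h2 ?_
      rw [hln, div_le_div_iff₀ (by positivity) (by positivity)]
      nlinarith
    calc ∫⁻ x in Ω, ENNReal.ofReal (|U n x / ln| ^ p (x, x)) ≤
        ∫⁻ _ in Ω, ENNReal.ofReal (1 / (V + 1)) := lintegral_mono fun x => hpt x
      _ = ENNReal.ofReal (1 / (V + 1)) * volume Ω := setLIntegral_const _ _
      _ = ENNReal.ofReal (1 / (V + 1)) * ENNReal.ofReal V := by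
          rw [← ENNReal.ofReal_toReal hvol]
      _ = ENNReal.ofReal (V / (V + 1)) := by
          rw [← ENNReal.ofReal_mul (by positivity)]; ring_nf
      _ ≤ 1 := by
          rw [← ENNReal.ofReal_one]
          exact ENNReal.ofReal_le_ofReal ((div_le_one (by positivity)).mpr (by linarith))
  have hmemlam : ∀ n, ∫⁻ x in Ω, ENNReal.ofReal (|U n x / lam| ^ p (x, x)) ≤ 1 := by
    intro n
    obtain ⟨l₂, hl₂mem, hl₂lt⟩ := exists_lt_of_csInf_lt ⟨_, hluxne n⟩ (hlux n)
    exact le_trans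
      (luxModular_anti volume Ω _ (U n) (fun x => hp0 (x, x)) hl₂mem.1 hl₂lt.le) hl₂mem.2
  have hmono : Monotone fun n : ℕ =>
      fun x => ENNReal.ofReal (|U n x / lam| ^ p (x, x)) := by
    intro n k hnk
    intro x
    refine ENNReal.ofReal_le_ofReal (Real.rpow_le_rpow (abs_nonneg _) ?_ (hp0 _))
    rw [abs_div, abs_div, abs_of_pos hlam0, hUabs, hUabs]
    exact div_le_div_nonneg_denom (min_le_min le_rfl (Nat.cast_le.mpr hnk)) hlam0.le
  have hsup : ∀ x, (⨆ n : ℕ, ENNReal.ofReal (|U n x / lam| ^ p (x, x))) =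
      ENNReal.ofReal (|u x / lam| ^ p (x, x)) := by
    intro x
    apply le_antisymm
    · refine iSup_le fun n =>
        ENNReal.ofReal_le_ofReal (Real.rpow_le_rpow (abs_nonneg _) ?_ (hp0 _))
      rw [abs_div, abs_div, abs_of_pos hlam0, hUabs]
      exact div_le_div_nonneg_denom (min_le_left _ _) hlam0.le
    · have hUx : |U ⌈|u x|⌉₊ x| = |u x| := by
        rw [hUabs]; exact min_eq_left (Nat.le_ceil _)
      refine le_trans (le_of_eq ?_) (le_iSup _ ⌈|u x|⌉₊)
      rw [abs_div, abs_div, hUx]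
  calc ∫⁻ x in Ω, ENNReal.ofReal (|u x / lam| ^ p (x, x))
      = ∫⁻ x in Ω, ⨆ n : ℕ, ENNReal.ofReal (|U n x / lam| ^ p (x, x)) :=
        lintegral_congr fun x => (hsup x).symm
    _ = ⨆ n : ℕ, ∫⁻ x in Ω, ENNReal.ofReal (|U n x / lam| ^ p (x, x)) :=
        lintegral_iSup
          (fun n => (((hUmeas n).div_const lam).abs.pow hpbarm).ennreal_ofReal) hmono
    _ ≤ 1 := iSup_le hmemlam

lemma rpow_le_max {l e lo hi : ℝ} (hl : 0 < l) (hlo : lo ≤ e) (hhi : e ≤ hi) :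
    l ^ e ≤ max (l ^ hi) (l ^ lo) := by
  rcases le_total 1 l with h | h
  · exact le_max_of_le_left (Real.rpow_le_rpow_of_exponent_le h hhi)
  · exact le_max_of_le_right (Real.rpow_le_rpow_of_exponent_ge hl h hlo)

lemma delta_finite {N : ℕ}
    {p s : EuclideanSpace ℝ (Fin N) × EuclideanSpace ℝ (Fin N) → ℝ}
    (hpc : Continuous p) (hsc : Continuous s) (hp1 : ∀ z, 1 ≤ p z)
    {pm pp : ℝ} (hpm : ∀ z, pm ≤ p z) (hpp : ∀ z, p z ≤ pp)
    {u : EuclideanSpace ℝ (Fin N) → ℝ} (hum : Measurable u)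
    {l₀ : ℝ} (hl₀ : 0 < l₀) (hl₀m : fracModular N p s l₀ u ≤ 1) :
    deltaModular N p s u ≠ ⊤ := by
  set K := max (l₀ ^ pp) (l₀ ^ pm) with hK
  have hK0 : 0 ≤ K := le_max_iff.mpr (Or.inl (Real.rpow_nonneg hl₀.le _))
  have hchain : deltaModular N p s u ≤ ENNReal.ofReal K := by
    calc deltaModular N p s u
        ≤ ∫⁻ z : EuclideanSpace ℝ (Fin N) × EuclideanSpace ℝ (Fin N),
            ENNReal.ofReal K * ENNReal.ofReal
              (|u z.1 - u z.2| ^ p z /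
                (l₀ ^ p z * ‖z.1 - z.2‖ ^ ((N : ℝ) + p z * s z))) := by
          refine lintegral_mono fun z => ?_
          rw [← ENNReal.ofReal_mul hK0]
          refine ENNReal.ofReal_le_ofReal ?_
          set A := |u z.1 - u z.2| ^ p z with hA
          set B := ‖z.1 - z.2‖ ^ ((N : ℝ) + p z * s z) with hB
          have hA0 : 0 ≤ A := Real.rpow_nonneg (abs_nonneg _) _
          have hB0 : 0 ≤ B := Real.rpow_nonneg (norm_nonneg _) _
          have hD0 : 0 ≤ A / B := div_nonneg hA0 hB0
          rw [div_mul_denom]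
          have hpz : (0:ℝ) < p z := lt_of_lt_of_le one_pos (hp1 z)
          have hl0p : (0:ℝ) < l₀ ^ p z := Real.rpow_pos_of_pos hl₀ _
          have e1 : 1 ≤ K / l₀ ^ p z :=
            (one_le_div hl0p).mpr (rpow_le_max hl₀ (hpm z) (hpp z))
          have e2 : 1 / p z ≤ 1 := by
            rw [div_le_one hpz]; exact hp1 z
          have e3 : 1 / p z ≤ K / l₀ ^ p z := le_trans e2 e1
          calc 1 / p z * (A / B) ≤ K / l₀ ^ p z * (A / B) :=
              mul_le_mul_of_nonneg_right e3 hD0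
            _ = K * (A / B / l₀ ^ p z) := by ring
      _ = ENNReal.ofReal K * fracModular N p s l₀ u :=
          lintegral_const_mul' _ _ ENNReal.ofReal_ne_top
      _ ≤ ENNReal.ofReal K * 1 := by gcongr
      _ = ENNReal.ofReal K := mul_one _
  exact ne_top_of_le_ne_top ENNReal.ofReal_ne_top hchain

lemma delta_lower {N : ℕ}
    {p s : EuclideanSpace ℝ (Fin N) × EuclideanSpace ℝ (Fin N) → ℝ}
    (hp1 : ∀ z, 1 ≤ p z)
    {pm pp : ℝ} (hpm : ∀ z, pm ≤ p z) (hpp : ∀ z, p z ≤ pp) (hpp0 : 0 < pp)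
    {u : EuclideanSpace ℝ (Fin N) → ℝ}
    (hfin : deltaModular N p s u ≠ ⊤) (h2 : 2 ≤ fracNorm N p s u) :
    (fracNorm N p s u - 1) ^ pm / pp ≤ (deltaModular N p s u).toReal := by
  set t := fracNorm N p s u with ht
  set lam := t - 1 with hlamdef
  have hlam1 : 1 ≤ lam := by rw [hlamdef]; linarith
  have hlam0 : 0 < lam := by linarith
  have hnot : ¬ fracModular N p s lam u ≤ 1 := by
    intro h
    have hmem : lam ∈ {l : ℝ | 0 < l ∧ fracModular N p s l u ≤ 1} := ⟨hlam0, h⟩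
    have h3 := csInf_le ⟨0, fun x hx => hx.1.le⟩ hmem
    have h4 : t ≤ lam := h3
    linarith
  have hgt : 1 ≤ fracModular N p s lam u := (not_le.mp hnot).le
  set c := lam ^ pm / pp with hc
  have hc0 : 0 ≤ c := div_nonneg (Real.rpow_nonneg hlam0.le _) hpp0.le
  have hchain : ENNReal.ofReal c ≤ deltaModular N p s u := by
    calc ENNReal.ofReal c = ENNReal.ofReal c * 1 := (mul_one _).symm
      _ ≤ ENNReal.ofReal c * fracModular N p s lam u := by gcongr
      _ = ∫⁻ z : EuclideanSpace ℝ (Fin N) × EuclideanSpace ℝ (Fin N),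
            ENNReal.ofReal c * ENNReal.ofReal
              (|u z.1 - u z.2| ^ p z /
                (lam ^ p z * ‖z.1 - z.2‖ ^ ((N : ℝ) + p z * s z))) :=
          (lintegral_const_mul' _ _ ENNReal.ofReal_ne_top).symm
      _ ≤ deltaModular N p s u := by
          refine lintegral_mono fun z => ?_
          rw [← ENNReal.ofReal_mul hc0]
          refine ENNReal.ofReal_le_ofReal ?_
          set A := |u z.1 - u z.2| ^ p z with hA
          set B := ‖z.1 - z.2‖ ^ ((N : ℝ) + p z * s z) with hB
          have hA0 : 0 ≤ A := Real.rpow_nonneg (abs_nonneg _) _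
          have hB0 : 0 ≤ B := Real.rpow_nonneg (norm_nonneg _) _
          have hD0 : 0 ≤ A / B := div_nonneg hA0 hB0
          rw [div_mul_denom]
          have hpz : (0:ℝ) < p z := lt_of_lt_of_le one_pos (hp1 z)
          have hlamp : (0:ℝ) < lam ^ p z := Real.rpow_pos_of_pos hlam0 _
          have e1 : lam ^ pm ≤ lam ^ p z :=
            Real.rpow_le_rpow_of_exponent_le hlam1 (hpm z)
          have e3 : c / lam ^ p z ≤ 1 / pp := by
            rw [hc, div_div, mul_comm, ← div_div]
            exact div_le_div_nonneg_denom
              ((div_le_one hlamp).mpr e1) hpp0.le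
          have e4 : (1:ℝ) / pp ≤ 1 / p z :=
            one_div_le_one_div_of_le hpz (hpp z)
          calc c * (A / B / lam ^ p z) = c / lam ^ p z * (A / B) := by ring
            _ ≤ 1 / p z * (A / B) :=
              mul_le_mul_of_nonneg_right (le_trans e3 e4) hD0
  exact (ENNReal.ofReal_le_iff_le_toReal hfin).mp hchain
theorem energy_coercive (N : ℕ) (hN : 1 ≤ N)
    (Ω : Set (EuclideanSpace ℝ (Fin N))) (hΩopen : IsOpen Ω)
    (hΩbdd : Bornology.IsBounded Ω)
    (p s : EuclideanSpace ℝ (Fin N) × EuclideanSpace ℝ (Fin N) → ℝ)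
    (hpc : Continuous p) (hsc : Continuous s)
    (hpsymm : ∀ x y, p (x, y) = p (y, x)) (hssymm : ∀ x y, s (x, y) = s (y, x))
    (hpinf : 1 < ⨅ z, p z) (hpbdd : BddAbove (Set.range p))
    (hsinf : 0 < ⨅ z, s z) (hsbdd : BddAbove (Set.range s))
    (hssup : ⨆ z, s z < 1)
    (m γ : ℝ) (hm : 0 < m) (hγ : 1 / (⨅ z, p z) < γ)
    (M₁ M₂ : ℝ → ℝ)
    (hM₁c : ContinuousOn M₁ (Set.Ioi 0)) (hM₂c : ContinuousOn M₂ (Set.Ioi 0))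
    (hM₁pos : ∀ t : ℝ, 0 < t → 0 < M₁ t) (hM₂pos : ∀ t : ℝ, 0 < t → 0 < M₂ t)
    (hM₁low : ∀ t : ℝ, 0 < t → m * t ^ (γ - 1) ≤ M₁ t)
    (hM₂low : ∀ t : ℝ, 0 < t → m * t ^ (γ - 1) ≤ M₂ t)
    (hM₁int : ∀ t : ℝ, 0 < t → IntegrableOn M₁ (Set.Ioo 0 t) volume)
    (hM₂int : ∀ t : ℝ, 0 < t → IntegrableOn M₂ (Set.Ioo 0 t) volume)
    (H : ℝ → ℝ → ℝ) (hHc : Continuous fun z : ℝ × ℝ => H z.1 z.2)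
    (hHbdd : ∃ CH : ℝ, ∀ x y : ℝ, |H x y| ≤ CH)
    (q : EuclideanSpace ℝ (Fin N) → ℝ)
    (hq : ∀ x ∈ Ω, 1 / p (x, x) + 1 / q x = 1)
    (a b : EuclideanSpace ℝ (Fin N) → ℝ) (ha : Measurable a) (hb : Measurable b)
    (hafin : ∃ lam > (0 : ℝ), ∫⁻ x in Ω, ENNReal.ofReal (|a x / lam| ^ q x) ≤ 1)
    (hbfin : ∃ lam > (0 : ℝ), ∫⁻ x in Ω, ENNReal.ofReal (|b x / lam| ^ q x) ≤ 1)
    (C : ℝ) (hC : 0 < C)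
    (hembed : ∀ u, memX0 N p s Ω u →
      luxNorm Ω (fun x => p (x, x)) u ≤ C * fracNorm N p s u) :
    ∀ R : ℝ, ∃ ρ > (0 : ℝ), ∀ u v : EuclideanSpace ℝ (Fin N) → ℝ,
      memX0 N p s Ω u → memX0 N p s Ω v →
      ρ ≤ fracNorm N p s u + fracNorm N p s v →
      R ≤ energy N p s Ω M₁ M₂ H a b u v := by
  intro R
  -- exponent bounds
  have hbb : BddBelow (Set.range p) := by
    by_contra hcon
    rw [Real.iInf_of_not_bddBelow hcon] at hpinf
    linarith
  set pm := ⨅ z, p z with hpmdef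
  set pp := ⨆ z, p z with hppdef
  have hpmle : ∀ z, pm ≤ p z := fun z => ciInf_le hbb z
  have hple : ∀ z, p z ≤ pp := fun z => le_ciSup hpbdd z
  have hpm1 : 1 < pm := hpinf
  have hpm0 : 0 < pm := by linarith
  have hp1 : ∀ z, 1 ≤ p z := fun z => le_trans hpm1.le (hpmle z)
  obtain ⟨z₀⟩ : Nonempty (EuclideanSpace ℝ (Fin N) × EuclideanSpace ℝ (Fin N)) :=
    inferInstance
  have hpmpp : pm ≤ pp := le_trans (hpmle z₀) (hple z₀)
  have hpp1 : 1 < pp := lt_of_lt_of_le hpm1 hpmpp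
  have hpp0 : 0 < pp := by linarith
  have hγ0 : 0 < γ := lt_trans (by positivity) hγ
  set α := pm * γ with hαdef
  have hα : 1 < α := by
    have := (div_lt_iff₀ hpm0).mp hγ
    rw [hαdef]; nlinarith
  -- data
  obtain ⟨CH, hCH⟩ := hHbdd
  have hCH0 : 0 ≤ CH := le_trans (abs_nonneg _) (hCH 0 0)
  have hΩmeas : MeasurableSet Ω := hΩopen.measurableSet
  have hvol : volume Ω ≠ ⊤ := hΩbdd.measure_lt_top.ne
  set V := (volume Ω).toReal with hVdef
  have hV0 : 0 ≤ V := ENNReal.toReal_nonneg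
  obtain ⟨la, hla, hlaF⟩ := hafin
  obtain ⟨lb, hlb, hlbF⟩ := hbfin
  set c₁ := (m / γ) / pp ^ γ with hc₁def
  have hc₁ : 0 < c₁ := by
    have : (0:ℝ) < pp ^ γ := Real.rpow_pos_of_pos hpp0 _
    positivity
  set K := 2 * C * (la + lb) with hKdef
  have hK0 : 0 ≤ K := by positivity
  set K₀ := CH * V + 2 * la + 2 * lb with hK₀def
  have hK₀0 : 0 ≤ K₀ := by positivity
  obtain ⟨ρ, hρ4, hρarith⟩ := arith_choice c₁ K K₀ R α hc₁ hα hK0 hK₀0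
  refine ⟨ρ, by linarith, ?_⟩
  intro u v hu hv hT
  set t₁ := fracNorm N p s u with ht₁def
  set t₂ := fracNorm N p s v with ht₂def
  have ht₁0 : 0 ≤ t₁ := Real.sInf_nonneg fun x hx => hx.1.le
  have ht₂0 : 0 ≤ t₂ := Real.sInf_nonneg fun x hx => hx.1.le
  set T := t₁ + t₂ with hTdef
  have hTρ : ρ ≤ T := hT
  have hT4 : (4:ℝ) ≤ T := le_trans hρ4 hTρ
  -- conjugate exponent data on Ω
  have hpbarm : Measurable fun x : EuclideanSpace ℝ (Fin N) => p (x, x) :=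
    (hpc.comp (continuous_id.prodMk continuous_id)).measurable
  have hconj : ∀ x ∈ Ω, 1 < p (x, x) ∧ 1 / p (x, x) + 1 / q x = 1 :=
    fun x hx => ⟨lt_of_lt_of_le hpm1 (hpmle (x, x)), hq x hx⟩
  -- bounds on the three integrals
  have hIH : (∫ x in Ω, H (u x) (v x)) ≤ CH * V := by
    have := norm_setIntegral_le_of_norm_le_const (μ := volume)
      (f := fun x => H (u x) (v x)) hΩbdd.measure_lt_top
      (fun x _ => by simpa [Real.norm_eq_abs] using hCH (u x) (v x))
    calc (∫ x in Ω, H (u x) (v x)) ≤ |∫ x in Ω, H (u x) (v x)| := le_abs_self _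
      _ ≤ CH * V := by simpa [Real.norm_eq_abs, hVdef, measureReal_def] using this
  have hIa : (∫ x in Ω, a x * u x) ≤ 2 * (la * (C * t₁ + 1)) := by
    have hG := lux_admissible hpc hp1 hvol hC hembed u hu
    have h2 := pairing_bound (lu := C * t₁ + 1) volume Ω hΩmeas
      (fun x => p (x, x)) q hpbarm hconj a u hu.1 hla (by positivity) hlaF
      (by rw [← ht₁def] at hG; exact hG)
    exact le_trans (le_abs_self _) h2
  have hIb : (∫ x in Ω, b x * v x) ≤ 2 * (lb * (C * t₂ + 1)) := by
    have hG := lux_admissible hpc hp1 hvol hC hembed v hv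
    have h2 := pairing_bound (lu := C * t₂ + 1) volume Ω hΩmeas
      (fun x => p (x, x)) q hpbarm hconj b v hv.1 hlb (by positivity) hlbF
      (by rw [← ht₂def] at hG; exact hG)
    exact le_trans (le_abs_self _) h2
  -- nonnegativity of the M̃ terms
  have hA₁0 : 0 ≤ ∫ τ in Set.Ioo (0:ℝ) ((deltaModular N p s u).toReal), M₁ τ :=
    setIntegral_nonneg measurableSet_Ioo fun τ hτ => (hM₁pos τ hτ.1).le
  have hA₂0 : 0 ≤ ∫ τ in Set.Ioo (0:ℝ) ((deltaModular N p s v).toReal), M₂ τ :=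
    setIntegral_nonneg measurableSet_Ioo fun τ hτ => (hM₂pos τ hτ.1).le
  -- lower bound on one of the M̃ terms
  have key : ∀ (w : EuclideanSpace ℝ (Fin N) → ℝ) (M : ℝ → ℝ),
      memX0 N p s Ω w → (∀ t : ℝ, 0 < t → m * t ^ (γ - 1) ≤ M t) →
      (∀ t : ℝ, 0 < t → IntegrableOn M (Set.Ioo 0 t) volume) →
      T / 2 ≤ fracNorm N p s w →
      c₁ * (T / 4) ^ α ≤ ∫ τ in Set.Ioo (0:ℝ) ((deltaModular N p s w).toReal), M τ := by
    intro w M hw hMlow hMint htw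
    obtain ⟨hwm, hw0, l₀, hl₀, hl₀m⟩ := hw
    have hfin : deltaModular N p s w ≠ ⊤ :=
      delta_finite hpc hsc hp1 hpmle hple hwm hl₀ hl₀m
    set tw := fracNorm N p s w with htwdef
    have htw2 : 2 ≤ tw := by rw [htwdef]; linarith [htw]
    have hdl : (tw - 1) ^ pm / pp ≤ (deltaModular N p s w).toReal :=
      delta_lower hp1 hpmle hple hpp0 hfin htw2
    have hbase : T / 4 ≤ tw - 1 := by linarith [htw]
    have hT40 : (0:ℝ) ≤ T / 4 := by linarith
    have h1 : (T / 4) ^ pm / pp ≤ (tw - 1) ^ pm / pp :=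
      div_le_div_nonneg_denom (Real.rpow_le_rpow hT40 hbase hpm0.le) hpp0.le
    have hd0 : 0 < (deltaModular N p s w).toReal := by
      have : (0:ℝ) < (T / 4) ^ pm / pp := by
        have : (0:ℝ) < T / 4 := by linarith
        have := Real.rpow_pos_of_pos this pm
        positivity
      linarith
    have h2 : m / γ * ((deltaModular N p s w).toReal) ^ γ ≤
        ∫ τ in Set.Ioo (0:ℝ) ((deltaModular N p s w).toReal), M τ :=
      mtilde_lb hm hγ0 hMlow hMint hd0
    have h3 : ((T / 4) ^ pm / pp) ^ γ ≤ ((deltaModular N p s w).toReal) ^ γ :=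
      Real.rpow_le_rpow (by positivity) (le_trans h1 hdl) hγ0.le
    have h4 : ((T / 4) ^ pm / pp) ^ γ = (T / 4) ^ α / pp ^ γ := by
      rw [Real.div_rpow (Real.rpow_nonneg hT40 _) hpp0.le, hαdef,
        Real.rpow_mul hT40]
    have h5 : c₁ * (T / 4) ^ α = m / γ * ((T / 4) ^ α / pp ^ γ) := by
      rw [hc₁def]; ring
    calc c₁ * (T / 4) ^ α = m / γ * (((T / 4) ^ pm / pp) ^ γ) := by rw [h5, h4]
      _ ≤ m / γ * ((deltaModular N p s w).toReal) ^ γ := by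
          apply mul_le_mul_of_nonneg_left h3 (by positivity)
      _ ≤ _ := h2
  have harith := hρarith T hTρ
  show R ≤ (∫ τ in Set.Ioo (0:ℝ) ((deltaModular N p s u).toReal), M₁ τ) +
      (∫ τ in Set.Ioo (0:ℝ) ((deltaModular N p s v).toReal), M₂ τ) -
      (∫ x in Ω, H (u x) (v x)) - (∫ x in Ω, a x * u x) - ∫ x in Ω, b x * v x
  clear_value pm pp α c₁ K K₀ V t₁ t₂ T
  have e1 : 0 ≤ 2 * C * la * t₂ := by positivity
  have e2 : 0 ≤ 2 * C * lb * t₁ := by positivity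
  have hexp : K * T = 2 * C * la * t₁ + 2 * C * la * t₂ +
      2 * C * lb * t₁ + 2 * C * lb * t₂ := by rw [hKdef, hTdef]; ring
  have hIa' : 2 * (la * (C * t₁ + 1)) = 2 * C * la * t₁ + 2 * la := by ring
  have hIb' : 2 * (lb * (C * t₂ + 1)) = 2 * C * lb * t₂ + 2 * lb := by ring
  rcases le_total t₂ t₁ with hcase | hcase
  · have hkey := key u M₁ hu hM₁low hM₁int (by linarith)
    linarith [hkey, hA₂0, hIH, hIa, hIb]
  · have hkey := key v M₂ hv hM₂low hM₂int (by linarith)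
    linarith [hkey, hA₁0, hIH, hIa, hIb]
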